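/- arXiv:0804.0326 — 2 statements merged into one kernel-verified Lean document; each statement's English description precedes it below -/
import Mathlib

section
/- For every 𝒯-category (X,a) and every 𝒯-module ψ: X ⇸∘ G, one has (y_X)_* ⟜ ψ = ⟨ψ⟩_*; that is, ⟨ψ⟩ ≅ colim(ψ, y_X), so every presheaf in X̂ is a weighted colimit of representables. -/
universe u

namespace Paper

/-- A strict topological theory `𝒯 = (𝕋, V, ξ)`: a commutative unital quantale `V`
(a complete lattice with a commutative monoid structure whose multiplication preserves
suprema in each variable, with `⊥ < k`), a `Set`-monad `𝕋 = (T, e, m)` such that `T`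
sends pullbacks to weak pullbacks and the naturality squares of `m` are weak pullbacks,
and a `𝕋`-algebra structure `ξ : T V → V` for which `⊗` and `k` are `𝕋`-algebra
homomorphisms and `ξ_X := ξ ∘ T(-)` is a (monotone) natural transformation
`P_V → P_V T`. -/
structure TopTheory (V : Type u) [CompleteLattice V] (T : Type u → Type u) where
  tens : V → V → V
  unit : V
  tens_comm : ∀ u v : V, tens u v = tens v u
  tens_assoc : ∀ u v w : V, tens (tens u v) w = tens u (tens v w)
  unit_tens : ∀ v : V, tens unit v = v
  tens_sSup : ∀ (u : V) (S : Set V), tens u (sSup S) = ⨆ v ∈ S, tens u v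
  bot_lt_unit : (⊥ : V) < unit
  map : ∀ {X Y : Type u}, (X → Y) → T X → T Y
  map_id : ∀ {X : Type u}, map (id : X → X) = id
  map_comp : ∀ {X Y Z : Type u} (g : Y → Z) (f : X → Y) (𝔵 : T X),
    map (g ∘ f) 𝔵 = map g (map f 𝔵)
  e : ∀ {X : Type u}, X → T X
  m : ∀ {X : Type u}, T (T X) → T X
  e_nat : ∀ {X Y : Type u} (f : X → Y) (x : X), map f (e x) = e (f x)
  m_nat : ∀ {X Y : Type u} (f : X → Y) (𝔛 : T (T X)), map f (m 𝔛) = m (map (map f) 𝔛)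
  m_e : ∀ {X : Type u} (𝔵 : T X), m (e 𝔵) = 𝔵
  m_map_e : ∀ {X : Type u} (𝔵 : T X), m (map e 𝔵) = 𝔵
  m_assoc : ∀ {X : Type u} (𝔜 : T (T (T X))), m (m 𝔜) = m (map m 𝔜)
  /-- (BC): `T` sends pullbacks to weak pullbacks. -/
  map_bc : ∀ {X Y Z : Type u} (f : X → Z) (g : Y → Z) (𝔵 : T X) (𝔶 : T Y),
    map f 𝔵 = map g 𝔶 →
    ∃ 𝔴 : T {p : X × Y // f p.1 = g p.2},
      map (fun p => p.1.1) 𝔴 = 𝔵 ∧ map (fun p => p.1.2) 𝔴 = 𝔶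
  /-- (BC): every naturality square of `m` is a weak pullback. -/
  m_bc : ∀ {X Y : Type u} (f : X → Y) (𝔜 : T (T Y)) (𝔵 : T X),
    m 𝔜 = map f 𝔵 → ∃ 𝔛 : T (T X), map (map f) 𝔛 = 𝔜 ∧ m 𝔛 = 𝔵
  xi : T V → V
  xi_e : ∀ v : V, xi (e v) = v
  xi_m : ∀ 𝔙 : T (T V), xi (m 𝔙) = xi (map xi 𝔙)
  /-- `k : 1 → V` is a `𝕋`-algebra homomorphism. -/
  xi_unit : ∀ {X : Type u} (𝔵 : T X), xi (map (fun _ => unit) 𝔵) = unit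
  /-- `⊗ : V × V → V` is a `𝕋`-algebra homomorphism. -/
  xi_tens : ∀ 𝔴 : T (V × V),
    xi (map (fun p => tens p.1 p.2) 𝔴) = tens (xi (map Prod.fst 𝔴)) (xi (map Prod.snd 𝔴))
  /-- each component `ξ_X : V^X → V^{T X}` is monotone. -/
  xi_mono : ∀ {X : Type u} (φ φ' : X → V), (∀ x, φ x ≤ φ' x) →
    ∀ 𝔵 : T X, xi (map φ 𝔵) ≤ xi (map φ' 𝔵)
  /-- `ξ_X` is a natural transformation `P_V → P_V T`. -/
  xi_nat : ∀ {X Y : Type u} (f : X → Y) (φ : X → V) (𝔶 : T Y),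
    (⨆ 𝔵 : {𝔵 : T X // map f 𝔵 = 𝔶}, xi (map φ 𝔵.1)) =
      xi (map (fun y => ⨆ x : {x : X // f x = y}, φ x.1) 𝔶)

namespace TopTheory

variable {V : Type u} [CompleteLattice V] {T : Type u → Type u}

/-- The internal hom of the quantale: `u ⊗ (-) ⊣ hom (u, -)`. -/
def ihom (𝒯 : TopTheory V T) (u w : V) : V := sSup {z | 𝒯.tens u z ≤ w}

/-- The extension `T_ξ` of `T : Set → Set` to `V`-relations. -/
def Txi (𝒯 : TopTheory V T) {X Y : Type u} (r : X → Y → V) (𝔵 : T X) (𝔶 : T Y) : V :=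
  ⨆ 𝔴 : {w : T (X × Y) // 𝒯.map Prod.fst w = 𝔵 ∧ 𝒯.map Prod.snd w = 𝔶},
    𝒯.xi (𝒯.map (fun p => r p.1 p.2) 𝔴.1)

/-- Kleisli convolution `β ∘ α = β · T_ξ α · m_X°` of `𝒯`-relations
`α : X ⇸ Y` and `β : Y ⇸ Z`. -/
def kleisli (𝒯 : TopTheory V T) {X Y Z : Type u}
    (β : T Y → Z → V) (α : T X → Y → V) (𝔵 : T X) (z : Z) : V :=
  ⨆ 𝔛 : {𝔛 : T (T X) // 𝒯.m 𝔛 = 𝔵}, ⨆ 𝔶 : T Y, 𝒯.tens (𝒯.Txi α 𝔛.1 𝔶) (β 𝔶 z)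

/-- The `𝒯`-relation `e_X° : X ⇸ X`. -/
def unitRel (𝒯 : TopTheory V T) (X : Type u) (𝔵 : T X) (x : X) : V :=
  ⨆ _ : 𝔵 = 𝒯.e x, 𝒯.unit

/-- A `𝒯`-category structure on `X`: a `𝒯`-relation `a : X ⇸ X` with
`e_X° ≤ a` and `a ∘ a ≤ a`. -/
structure TCatStr (𝒯 : TopTheory V T) (X : Type u) where
  rel : T X → X → V
  le_refl : ∀ x : X, 𝒯.unit ≤ rel (𝒯.e x) x
  comp : ∀ (𝔵 : T X) (x : X), 𝒯.kleisli rel rel 𝔵 x ≤ rel 𝔵 x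

/-- The `𝒯`-module conditions `φ ∘ a ≤ φ` and `b ∘ φ ≤ φ` for a `𝒯`-relation
`φ : X ⇸ Y` between (structures underlying) `𝒯`-categories `(X,a)` and `(Y,b)`. -/
def IsTModRel (𝒯 : TopTheory V T) {X Y : Type u}
    (a : T X → X → V) (b : T Y → Y → V) (φ : T X → Y → V) : Prop :=
  (∀ 𝔵 y, 𝒯.kleisli φ a 𝔵 y ≤ φ 𝔵 y) ∧ (∀ 𝔵 y, 𝒯.kleisli b φ 𝔵 y ≤ φ 𝔵 y)

variable {𝒯 : TopTheory V T}

/-- `f_* = b · T f`. -/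
def modStar {X Y : Type u} (b : 𝒯.TCatStr Y) (f : X → Y) (𝔵 : T X) (y : Y) : V :=
  b.rel (𝒯.map f 𝔵) y

/-- `f^* = f° · b`. -/
def modCostar {X Y : Type u} (b : 𝒯.TCatStr Y) (f : X → Y) (𝔶 : T Y) (x : X) : V :=
  b.rel 𝔶 (f x)

/-- The extension `φ ⟜ ψ` of `φ : X ⇸∘ Y` along `ψ : X ⇸∘ Z`, given by
`(φ ⟜ ψ)(𝔷,y) = ⋀_{𝔵 ∈ T X} hom((T_ξ ψ · m_X°)(𝔵,𝔷), φ(𝔵,y))`. -/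
def extend (𝒯 : TopTheory V T) {X Y Z : Type u}
    (φ : T X → Y → V) (ψ : T X → Z → V) (𝔷 : T Z) (y : Y) : V :=
  ⨅ 𝔵 : T X, 𝒯.ihom (⨆ 𝔛 : {𝔛 : T (T X) // 𝒯.m 𝔛 = 𝔵}, 𝒯.Txi ψ 𝔛.1 𝔷) (φ 𝔵 y)

/-- A `𝒯`-functor `f : (X,a) → (Y,b)`. -/
def IsTFunctor {X Y : Type u} (a : 𝒯.TCatStr X) (b : 𝒯.TCatStr Y) (f : X → Y) : Prop :=
  ∀ (𝔵 : T X) (x : X), a.rel 𝔵 x ≤ b.rel (𝒯.map f 𝔵) (f x)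

/-- A fully faithful `𝒯`-functor. -/
def FullyFaithful {X Y : Type u} (a : 𝒯.TCatStr X) (b : 𝒯.TCatStr Y) (f : X → Y) : Prop :=
  ∀ (𝔵 : T X) (x : X), a.rel 𝔵 x = b.rel (𝒯.map f 𝔵) (f x)

/-- The order `f ≤ g ⟺ f^* ≤ g^*` on `𝒯`-functors `X → (Y,b)`. -/
def funLE {X Y : Type u} (b : 𝒯.TCatStr Y) (f g : X → Y) : Prop :=
  ∀ (𝔶 : T Y) (x : X), b.rel 𝔶 (f x) ≤ b.rel 𝔶 (g x)

/-- Equivalence `f ≅ g ⟺ f^* = g^*` of `𝒯`-functors `X → (Y,b)`. -/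
def FunEquiv {X Y : Type u} (b : 𝒯.TCatStr Y) (f g : X → Y) : Prop :=
  ∀ (𝔶 : T Y) (x : X), b.rel 𝔶 (f x) = b.rel 𝔶 (g x)

/-- `f ⊣ g`:  `1_X ≤ g·f` and `f·g ≤ 1_Y`. -/
def IsAdjunction {X Y : Type u} (a : 𝒯.TCatStr X) (b : 𝒯.TCatStr Y)
    (f : X → Y) (g : Y → X) : Prop :=
  (∀ (𝔵 : T X) (x : X), a.rel 𝔵 x ≤ a.rel 𝔵 (g (f x))) ∧
    (∀ (𝔶 : T Y) (y : Y), b.rel 𝔶 (f (g y)) ≤ b.rel 𝔶 y)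

/-- A left adjoint `𝒯`-functor. -/
def IsLeftAdjoint {X Y : Type u} (a : 𝒯.TCatStr X) (b : 𝒯.TCatStr Y) (f : X → Y) : Prop :=
  IsTFunctor a b f ∧ ∃ g : Y → X, IsTFunctor b a g ∧ IsAdjunction a b f g

/-- L-separatedness: equivalent `𝒯`-functors into `X` are equal. -/
def Separated {X : Type u} (a : 𝒯.TCatStr X) : Prop :=
  ∀ (A : Type u) (as : 𝒯.TCatStr A) (f g : A → X),
    IsTFunctor as a f → IsTFunctor as a g → FunEquiv a f g → f = g

/-- Injectivity with respect to fully faithful `𝒯`-functors. -/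
def Injective {X : Type u} (a : 𝒯.TCatStr X) : Prop :=
  ∀ (A B : Type u) (as : 𝒯.TCatStr A) (bs : 𝒯.TCatStr B) (f : A → X) (i : A → B),
    IsTFunctor as a f → IsTFunctor as bs i → FullyFaithful as bs i →
      ∃ g : B → X, IsTFunctor bs a g ∧ FunEquiv a (g ∘ i) f

/-- `g : Z → X` is the `ψ`-weighted colimit of `h : A → X`, i.e. `g_* = h_* ⟜ ψ`. -/
def IsColimit {X A Z : Type u} (a : 𝒯.TCatStr X) (h : A → X) (ψ : T A → Z → V)
    (g : Z → X) : Prop :=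
  ∀ (𝔷 : T Z) (x : X), modStar a g 𝔷 x = 𝒯.extend (modStar a h) ψ 𝔷 x

/-- Cocompleteness: every weighted diagram has a colimit. -/
def Cocomplete {X : Type u} (a : 𝒯.TCatStr X) : Prop :=
  ∀ (A Z : Type u) (as : 𝒯.TCatStr A) (cs : 𝒯.TCatStr Z) (h : A → X),
    IsTFunctor as a h → ∀ ψ : T A → Z → V, 𝒯.IsTModRel as.rel cs.rel ψ →
      ∃ g : Z → X, IsTFunctor cs a g ∧ IsColimit a h ψ g

/-- Cocontinuity: preservation of all weighted colimits. -/
def Cocontinuous {X Y : Type u} (a : 𝒯.TCatStr X) (b : 𝒯.TCatStr Y) (f : X → Y) : Prop :=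
  ∀ (A Z : Type u) (as : 𝒯.TCatStr A) (cs : 𝒯.TCatStr Z) (h : A → X)
    (ψ : T A → Z → V) (g : Z → X),
    IsTFunctor as a h → 𝒯.IsTModRel as.rel cs.rel ψ → IsTFunctor cs a g →
      IsColimit a h ψ g → IsColimit b (f ∘ h) ψ (f ∘ g)

/-- A presheaf on `(X,a)`: a `𝒯`-module `X ⇸∘ G`, where `G = (1, e_1°)`. -/
def IsPresheaf {X : Type u} (a : 𝒯.TCatStr X) (ψ : T X → V) : Prop :=
  𝒯.IsTModRel a.rel (𝒯.unitRel PUnit) (fun 𝔵 _ => ψ 𝔵)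

/-- The underlying set of the presheaf `𝒯`-category `X̂`. -/
def Hat {X : Type u} (a : 𝒯.TCatStr X) : Type u := {ψ : T X → V // IsPresheaf a ψ}

/-- The `𝒯`-category structure `⟦-,-⟧` of `V^{|X|}`. -/
def powRel (𝒯 : TopTheory V T) (X : Type u) (𝔭 : T (T X → V)) (ψ : T X → V) : V :=
  ⨅ 𝔮 : {q : T ((T X) × (T X → V)) // 𝒯.map Prod.snd q = 𝔭},
    𝒯.ihom (𝒯.xi (𝒯.map (fun p => p.2 p.1) 𝔮.1)) (ψ (𝒯.m (𝒯.map Prod.fst 𝔮.1)))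

/-- `hs` is the `𝒯`-category structure on `X̂` inherited from `V^{|X|}`. -/
def IsHatStr {X : Type u} (a : 𝒯.TCatStr X) (hs : 𝒯.TCatStr (Hat a)) : Prop :=
  ∀ (𝔭 : T (Hat a)) (ψ : Hat a), hs.rel 𝔭 ψ = 𝒯.powRel X (𝒯.map Subtype.val 𝔭) ψ.1

/-- `y` is the Yoneda functor `X → X̂`, `y x = a(-,x)`. -/
def IsYoneda {X : Type u} (a : 𝒯.TCatStr X) (y : X → Hat a) : Prop :=
  ∀ (x : X) (𝔵 : T X), (y x).1 𝔵 = a.rel 𝔵 x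

/-- The underlying map `ψ ↦ ψ ∘ f^*` of `f̂ : X̂ → Ŷ`. -/
def hatMapRel {X Y : Type u} (b : 𝒯.TCatStr Y) (f : X → Y) (ψ : T X → V) (𝔶 : T Y) : V :=
  𝒯.kleisli (fun 𝔵 (_ : PUnit.{u + 1}) => ψ 𝔵) (modCostar b f) 𝔶 PUnit.unit

/-- `fh` is the `𝒯`-functor `f̂ : X̂ → Ŷ`, with underlying map `ψ ↦ ψ ∘ f^*`. -/
def IsHatMap {X Y : Type u} (a : 𝒯.TCatStr X) (b : 𝒯.TCatStr Y) (f : X → Y)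
    (fh : Hat a → Hat b) : Prop :=
  ∀ (ψ : Hat a) (𝔶 : T Y), (fh ψ).1 𝔶 = hatMapRel b f ψ.1 𝔶

/-- An inhabited `𝒯`-module: `k ≤ ⋀_y ⋁_𝔵 φ(𝔵,y)`. -/
def InhabitedMod (𝒯 : TopTheory V T) {X Y : Type u} (φ : T X → Y → V) : Prop :=
  𝒯.unit ≤ ⨅ y : Y, ⨆ 𝔵 : T X, φ 𝔵 y

/-- A dense `𝒯`-functor: `f_*` is inhabited. -/
def Dense {X Y : Type u} (b : 𝒯.TCatStr Y) (f : X → Y) : Prop :=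
  𝒯.InhabitedMod (modStar b f)

/-- The underlying set of `X⁺ = {ψ ∈ X̂ ∣ ψ inhabited}`. -/
def Plus {X : Type u} (a : 𝒯.TCatStr X) : Type u :=
  {ψ : Hat a // 𝒯.InhabitedMod (fun 𝔵 (_ : PUnit.{u + 1}) => ψ.1 𝔵)}

/-- `ps` is the `𝒯`-category structure on `X⁺` inherited from `X̂`. -/
def IsPlusStr {X : Type u} (a : 𝒯.TCatStr X) (hs : 𝒯.TCatStr (Hat a))
    (ps : 𝒯.TCatStr (Plus a)) : Prop :=
  ∀ (𝔭 : T (Plus a)) (ψ : Plus a), ps.rel 𝔭 ψ = hs.rel (𝒯.map Subtype.val 𝔭) ψ.1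

/-- Inhabited-cocompleteness: all colimits with inhabited weights exist. -/
def ICocomplete {X : Type u} (a : 𝒯.TCatStr X) : Prop :=
  ∀ (A Z : Type u) (as : 𝒯.TCatStr A) (cs : 𝒯.TCatStr Z) (h : A → X),
    IsTFunctor as a h → ∀ ψ : T A → Z → V, 𝒯.IsTModRel as.rel cs.rel ψ →
      𝒯.InhabitedMod ψ → ∃ g : Z → X, IsTFunctor cs a g ∧ IsColimit a h ψ g

/-- Inhabited-cocontinuity: preservation of all colimits with inhabited weights. -/
def ICocontinuous {X Y : Type u} (a : 𝒯.TCatStr X) (b : 𝒯.TCatStr Y) (f : X → Y) : Prop :=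
  ∀ (A Z : Type u) (as : 𝒯.TCatStr A) (cs : 𝒯.TCatStr Z) (h : A → X)
    (ψ : T A → Z → V) (g : Z → X),
    IsTFunctor as a h → 𝒯.IsTModRel as.rel cs.rel ψ → 𝒯.InhabitedMod ψ →
      IsTFunctor cs a g → IsColimit a h ψ g → IsColimit b (f ∘ h) ψ (f ∘ g)


section Helpers

lemma map_map (𝒯 : TopTheory V T) {X Y Z : Type u} (g : Y → Z) (f : X → Y) (𝔵 : T X) :
    𝒯.map g (𝒯.map f 𝔵) = 𝒯.map (fun x => g (f x)) 𝔵 := (𝒯.map_comp g f 𝔵).symm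

lemma tens_le_tens_right (𝒯 : TopTheory V T) (u : V) {v v' : V} (h : v ≤ v') :
    𝒯.tens u v ≤ 𝒯.tens u v' := by
  have h3 : sSup ({v, v'} : Set V) = v' := by rw [sSup_pair, sup_eq_right.mpr h]
  have h2 := 𝒯.tens_sSup u ({v, v'} : Set V)
  rw [h3] at h2
  rw [h2]
  exact le_biSup _ (by simp)

lemma tens_le_tens_left (𝒯 : TopTheory V T) {u u' : V} (v : V) (h : u ≤ u') :
    𝒯.tens u v ≤ 𝒯.tens u' v := by
  rw [𝒯.tens_comm u v, 𝒯.tens_comm u' v]; exact 𝒯.tens_le_tens_right v h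

lemma tens_ihom_le (𝒯 : TopTheory V T) (u w : V) : 𝒯.tens u (𝒯.ihom u w) ≤ w := by
  rw [ihom, 𝒯.tens_sSup]
  exact iSup₂_le fun z hz => hz

lemma le_ihom (𝒯 : TopTheory V T) {u w z : V} (h : 𝒯.tens u z ≤ w) : z ≤ 𝒯.ihom u w :=
  le_sSup h

lemma ihom_anti (𝒯 : TopTheory V T) {u u' : V} (w : V) (h : u ≤ u') :
    𝒯.ihom u' w ≤ 𝒯.ihom u w :=
  𝒯.le_ihom (le_trans (𝒯.tens_le_tens_left _ h) (𝒯.tens_ihom_le u' w))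

lemma ihom_unit (𝒯 : TopTheory V T) (w : V) : 𝒯.ihom 𝒯.unit w = w := by
  refine le_antisymm ?_ (𝒯.le_ihom (by rw [𝒯.unit_tens]))
  have h := 𝒯.tens_ihom_le 𝒯.unit w
  rwa [𝒯.unit_tens] at h

lemma tens_iSup_le (𝒯 : TopTheory V T) {ι : Sort*} {u : ι → V} {r w : V}
    (h : ∀ i, 𝒯.tens (u i) r ≤ w) : 𝒯.tens (⨆ i, u i) r ≤ w := by
  rw [𝒯.tens_comm, iSup, 𝒯.tens_sSup]
  refine iSup₂_le fun z hz => ?_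
  obtain ⟨i, rfl⟩ := hz
  rw [𝒯.tens_comm]; exact h i

lemma xi_map_tens (𝒯 : TopTheory V T) {X : Type u} (f g : X → V) (𝔵 : T X) :
    𝒯.xi (𝒯.map (fun x => 𝒯.tens (f x) (g x)) 𝔵)
      = 𝒯.tens (𝒯.xi (𝒯.map f 𝔵)) (𝒯.xi (𝒯.map g 𝔵)) := by
  have h := 𝒯.xi_tens (𝒯.map (fun x => (f x, g x)) 𝔵)
  rw [𝒯.map_map, 𝒯.map_map, 𝒯.map_map] at h
  exact h

lemma presheaf_action (𝒯 : TopTheory V T) {X : Type u} (a : 𝒯.TCatStr X) (ψ : T X → V)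
    (hψ : IsPresheaf a ψ) (𝔴 : T (T X × X)) :
    𝒯.tens (𝒯.xi (𝒯.map (fun p => a.rel p.1 p.2) 𝔴)) (ψ (𝒯.map Prod.snd 𝔴))
      ≤ ψ (𝒯.m (𝒯.map Prod.fst 𝔴)) := by
  have hmod := hψ.1 (𝒯.m (𝒯.map Prod.fst 𝔴)) PUnit.unit
  refine le_trans ?_ hmod
  simp only [TopTheory.kleisli]
  refine le_trans ?_
    (le_iSup _ (⟨𝒯.map Prod.fst 𝔴, rfl⟩ : {𝔛 : T (T X) // 𝒯.m 𝔛 = 𝒯.m (𝒯.map Prod.fst 𝔴)}))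
  refine le_trans ?_ (le_iSup _ (𝒯.map Prod.snd 𝔴))
  refine 𝒯.tens_le_tens_left _ ?_
  simp only [TopTheory.Txi]
  exact le_iSup
    (fun 𝔴' : {w : T (T X × X) // 𝒯.map Prod.fst w = 𝒯.map Prod.fst 𝔴 ∧
        𝒯.map Prod.snd w = 𝒯.map Prod.snd 𝔴} =>
      𝒯.xi (𝒯.map (fun p => a.rel p.1 p.2) 𝔴'.1)) ⟨𝔴, rfl, rfl⟩

lemma crux (𝒯 : TopTheory V T) {X : Type u} (a : 𝒯.TCatStr X) (ψ : T X → V)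
    (hψ : IsPresheaf a ψ) (𝔯 : T (T X × X)) (𝔛 : T (T X))
    (h𝔛 : 𝒯.m 𝔛 = 𝒯.map Prod.snd 𝔯) :
    ∃ 𝔯' : T (T X),
      𝒯.m 𝔯' = 𝒯.m (𝒯.map Prod.fst 𝔯) ∧
      𝒯.map (fun _ => PUnit.unit.{u + 1}) 𝔯' = 𝒯.map (fun _ => PUnit.unit.{u + 1}) 𝔛 ∧
      𝒯.tens (𝒯.xi (𝒯.map (fun p => a.rel p.1 p.2) 𝔯)) (𝒯.xi (𝒯.map ψ 𝔛))
        ≤ 𝒯.xi (𝒯.map ψ 𝔯') := by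
  obtain ⟨𝔚, h1, h2⟩ := 𝒯.m_bc Prod.snd 𝔛 𝔯 h𝔛
  refine ⟨𝒯.map (fun 𝔶 => 𝒯.m (𝒯.map Prod.fst 𝔶)) 𝔚, ?_, ?_, ?_⟩
  · have e1 : 𝒯.map (fun 𝔶 : T (T X × X) => 𝒯.m (𝒯.map Prod.fst 𝔶)) 𝔚
        = 𝒯.map 𝒯.m (𝒯.map (𝒯.map Prod.fst) 𝔚) := (𝒯.map_map _ _ _).symm
    rw [e1, ← 𝒯.m_assoc, ← 𝒯.m_nat Prod.fst 𝔚, h2]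
  · rw [𝒯.map_map, ← h1, 𝒯.map_map]
  · have hA : 𝒯.xi (𝒯.map (fun p : T X × X => a.rel p.1 p.2) 𝔯)
        = 𝒯.xi (𝒯.map (fun 𝔶 : T (T X × X) =>
            𝒯.xi (𝒯.map (fun p => a.rel p.1 p.2) 𝔶)) 𝔚) := by
      rw [← h2, 𝒯.m_nat, 𝒯.xi_m, 𝒯.map_map]
    have hB : 𝒯.xi (𝒯.map ψ 𝔛)
        = 𝒯.xi (𝒯.map (fun 𝔶 : T (T X × X) => ψ (𝒯.map Prod.snd 𝔶)) 𝔚) := by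
      rw [← h1, 𝒯.map_map]
    calc 𝒯.tens (𝒯.xi (𝒯.map (fun p : T X × X => a.rel p.1 p.2) 𝔯)) (𝒯.xi (𝒯.map ψ 𝔛))
        = 𝒯.tens (𝒯.xi (𝒯.map (fun 𝔶 : T (T X × X) =>
              𝒯.xi (𝒯.map (fun p => a.rel p.1 p.2) 𝔶)) 𝔚))
            (𝒯.xi (𝒯.map (fun 𝔶 : T (T X × X) => ψ (𝒯.map Prod.snd 𝔶)) 𝔚)) := by
          rw [← hA, ← hB]
      _ = 𝒯.xi (𝒯.map (fun 𝔶 : T (T X × X) =>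
              𝒯.tens (𝒯.xi (𝒯.map (fun p => a.rel p.1 p.2) 𝔶))
                (ψ (𝒯.map Prod.snd 𝔶))) 𝔚) := (𝒯.xi_map_tens _ _ 𝔚).symm
      _ ≤ 𝒯.xi (𝒯.map (fun 𝔶 : T (T X × X) => ψ (𝒯.m (𝒯.map Prod.fst 𝔶))) 𝔚) :=
          𝒯.xi_mono _ _ (fun 𝔶 => 𝒯.presheaf_action a ψ hψ 𝔶) 𝔚
      _ = 𝒯.xi (𝒯.map ψ (𝒯.map (fun 𝔶 : T (T X × X) => 𝒯.m (𝒯.map Prod.fst 𝔶)) 𝔚)) := by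
          rw [𝒯.map_map]

end Helpers

/-- Proposition 2.3(1). For every `𝒯`-category `(X,a)` and every
`𝒯`-module `ψ : X ⇸∘ G`, one has `(y_X)_* ⟜ ψ = ⟨ψ⟩_*`; that is,
`⟨ψ⟩ ≅ colim(ψ, y_X)`, so every presheaf is a weighted colimit of representables. -/
theorem statement13 (𝒯 : TopTheory V T) {X : Type u} (a : 𝒯.TCatStr X)
    (hs : 𝒯.TCatStr (Hat a)) (hhs : IsHatStr a hs)
    (y : X → Hat a) (hy : IsYoneda a y)
    (ψ : Hat a) :
    ∀ (𝔞 : T PUnit.{u + 1}) (h : Hat a),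
      𝒯.extend (modStar hs y) (fun 𝔵 (_ : PUnit.{u + 1}) => ψ.1 𝔵) 𝔞 h =
        hs.rel (𝒯.map (fun _ => ψ) 𝔞) h := by
  intro 𝔞 h
  have hRHS : hs.rel (𝒯.map (fun _ => ψ) 𝔞) h
      = 𝒯.powRel X (𝒯.map (fun _ => ψ.1) 𝔞) h.1 := by
    rw [hhs]; exact congrArg (fun t => 𝒯.powRel X t h.1) (𝒯.map_map _ _ _)
  rw [hRHS]
  -- RHS is bounded by the term of any `𝔯'` over `𝔞`
  have key : ∀ 𝔯' : T (T X), 𝒯.map (fun _ => PUnit.unit.{u + 1}) 𝔯' = 𝔞 →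
      𝒯.powRel X (𝒯.map (fun _ => ψ.1) 𝔞) h.1
        ≤ 𝒯.ihom (𝒯.xi (𝒯.map ψ.1 𝔯')) (h.1 (𝒯.m 𝔯')) := by
    intro 𝔯' hc
    have hq : 𝒯.map Prod.snd (𝒯.map (fun 𝔵' : T X => (𝔵', ψ.1)) 𝔯')
        = 𝒯.map (fun _ => ψ.1) 𝔞 := by
      rw [𝒯.map_map, ← hc, 𝒯.map_map]
    refine le_trans (iInf_le _ ⟨𝒯.map (fun 𝔵' : T X => (𝔵', ψ.1)) 𝔯', hq⟩) ?_
    have h1 : 𝒯.map (fun p : T X × (T X → V) => p.2 p.1)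
        (𝒯.map (fun 𝔵' : T X => (𝔵', ψ.1)) 𝔯') = 𝒯.map ψ.1 𝔯' := by
      rw [𝒯.map_map]
    have h2 : 𝒯.map Prod.fst (𝒯.map (fun 𝔵' : T X => (𝔵', ψ.1)) 𝔯') = 𝔯' := by
      rw [𝒯.map_map]
      exact congrFun 𝒯.map_id 𝔯'
    rw [h1, h2]
  -- Yoneda-type evaluation: `⟦T y 𝔵, h⟧ ≤ h 𝔵`
  have yon : ∀ 𝔵 : T X, modStar hs y 𝔵 h ≤ h.1 𝔵 := by
    intro 𝔵
    have hmod : modStar hs y 𝔵 h = 𝒯.powRel X (𝒯.map (fun x => (y x).1) 𝔵) h.1 := by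
      show hs.rel (𝒯.map y 𝔵) h = _
      rw [hhs]; exact congrArg (fun t => 𝒯.powRel X t h.1) (𝒯.map_map _ _ _)
    rw [hmod]
    have hq : 𝒯.map Prod.snd (𝒯.map (fun x => (𝒯.e x, (y x).1)) 𝔵)
        = 𝒯.map (fun x => (y x).1) 𝔵 := by rw [𝒯.map_map]
    refine le_trans (iInf_le _ ⟨𝒯.map (fun x => (𝒯.e x, (y x).1)) 𝔵, hq⟩) ?_
    have h1 : 𝒯.m (𝒯.map Prod.fst (𝒯.map (fun x => (𝒯.e x, (y x).1)) 𝔵)) = 𝔵 := by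
      rw [𝒯.map_map]
      exact 𝒯.m_map_e 𝔵
    have h2 : 𝒯.map (fun p : T X × (T X → V) => p.2 p.1)
        (𝒯.map (fun x => (𝒯.e x, (y x).1)) 𝔵)
        = 𝒯.map (fun x => a.rel (𝒯.e x) x) 𝔵 := by
      rw [𝒯.map_map]
      congr 1
      funext x
      exact hy x (𝒯.e x)
    rw [h1, h2]
    have h3 : 𝒯.unit ≤ 𝒯.xi (𝒯.map (fun x => a.rel (𝒯.e x) x) 𝔵) := by
      have h4 := 𝒯.xi_mono (fun _ : X => 𝒯.unit) (fun x => a.rel (𝒯.e x) x)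
        (fun x => a.le_refl x) 𝔵
      rwa [𝒯.xi_unit] at h4
    exact le_trans (𝒯.ihom_anti _ h3) (le_of_eq (𝒯.ihom_unit _))
  refine le_antisymm ?_ ?_
  · -- `extend ≤ ⟨ψ⟩_*`
    refine le_iInf fun q => ?_
    obtain ⟨𝔴, hw1, hw2⟩ := 𝒯.map_bc Prod.snd (fun _ : PUnit.{u + 1} => ψ.1) q.1 𝔞 q.2
    set 𝔯' : T (T X) := 𝒯.map (fun w => w.1.1.1) 𝔴 with h𝔯'
    have hc : 𝒯.map (fun _ => PUnit.unit.{u + 1}) 𝔯' = 𝔞 := by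
      rw [h𝔯', 𝒯.map_map, ← hw2]
    have hfst : 𝒯.map Prod.fst q.1 = 𝔯' := by
      rw [h𝔯', ← hw1, 𝒯.map_map]
    have hev : 𝒯.map (fun p : T X × (T X → V) => p.2 p.1) q.1 = 𝒯.map ψ.1 𝔯' := by
      rw [h𝔯', ← hw1, 𝒯.map_map, 𝒯.map_map]
      congr 1
      funext w
      exact congrFun w.2 w.1.1.1
    rw [hev, hfst]
    refine le_trans (iInf_le _ (𝒯.m 𝔯')) ?_
    refine 𝒯.le_ihom ?_
    have hS : 𝒯.xi (𝒯.map ψ.1 𝔯')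
        ≤ ⨆ 𝔛 : {𝔛 : T (T X) // 𝒯.m 𝔛 = 𝒯.m 𝔯'},
            𝒯.Txi (fun 𝔵' (_ : PUnit.{u + 1}) => ψ.1 𝔵') 𝔛.1 𝔞 := by
      refine le_trans ?_ (le_iSup _ (⟨𝔯', rfl⟩ : {𝔛 : T (T X) // 𝒯.m 𝔛 = 𝒯.m 𝔯'}))
      have hmem1 : 𝒯.map Prod.fst
          (𝒯.map (fun 𝔵' : T X => (𝔵', PUnit.unit.{u + 1})) 𝔯') = 𝔯' := by
        rw [𝒯.map_map]
        exact congrFun 𝒯.map_id 𝔯'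
      have hmem2 : 𝒯.map Prod.snd
          (𝒯.map (fun 𝔵' : T X => (𝔵', PUnit.unit.{u + 1})) 𝔯') = 𝔞 := by
        rw [𝒯.map_map]
        exact hc
      simp only [TopTheory.Txi]
      refine le_trans (le_of_eq ?_) (le_iSup _ ⟨_, hmem1, hmem2⟩)
      exact congrArg 𝒯.xi (𝒯.map_map (fun p : T X × PUnit.{u + 1} => ψ.1 p.1)
        (fun 𝔵' : T X => (𝔵', PUnit.unit.{u + 1})) 𝔯').symm
    exact le_trans (𝒯.tens_le_tens_left _ hS)
      (le_trans (𝒯.tens_ihom_le _ _) (yon (𝒯.m 𝔯')))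
  · -- `⟨ψ⟩_* ≤ extend`
    refine le_iInf fun 𝔵 => 𝒯.le_ihom ?_
    have hmod : modStar hs y 𝔵 h = 𝒯.powRel X (𝒯.map (fun x => (y x).1) 𝔵) h.1 := by
      show hs.rel (𝒯.map y 𝔵) h = _
      rw [hhs]; exact congrArg (fun t => 𝒯.powRel X t h.1) (𝒯.map_map _ _ _)
    rw [hmod]
    refine le_iInf fun q' => ?_
    obtain ⟨𝔴, hw1, hw2⟩ := 𝒯.map_bc Prod.snd (fun x => (y x).1) q'.1 𝔵 q'.2
    set 𝔯 : T (T X × X) := 𝒯.map (fun w => (w.1.1.1, w.1.2)) 𝔴 with h𝔯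
    have hsnd : 𝒯.map Prod.snd 𝔯 = 𝔵 := by
      rw [h𝔯, 𝒯.map_map, ← hw2]
    have hfst : 𝒯.map Prod.fst q'.1 = 𝒯.map Prod.fst 𝔯 := by
      rw [h𝔯, ← hw1, 𝒯.map_map, 𝒯.map_map]
    have hev : 𝒯.map (fun p : T X × (T X → V) => p.2 p.1) q'.1
        = 𝒯.map (fun p : T X × X => a.rel p.1 p.2) 𝔯 := by
      rw [h𝔯, ← hw1, 𝒯.map_map, 𝒯.map_map]
      congr 1
      funext w
      exact (congrFun w.2 w.1.1.1).trans (hy w.1.2 w.1.1.1)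
    rw [hev, hfst]
    refine 𝒯.tens_iSup_le fun 𝔛 => ?_
    simp only [TopTheory.Txi]
    refine 𝒯.tens_iSup_le fun 𝔴' => ?_
    have hXval : 𝒯.xi (𝒯.map (fun p : T X × PUnit.{u + 1} => ψ.1 p.1) 𝔴'.1)
        = 𝒯.xi (𝒯.map ψ.1 𝔛.1) :=
      (congrArg 𝒯.xi (𝒯.map_map ψ.1 Prod.fst 𝔴'.1)).symm.trans
        (congrArg (fun t => 𝒯.xi (𝒯.map ψ.1 t)) 𝔴'.2.1)
    have h𝔞 : 𝒯.map (fun _ => PUnit.unit.{u + 1}) 𝔛.1 = 𝔞 := by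
      have t1 : 𝒯.map (fun _ => PUnit.unit.{u + 1}) 𝔛.1
          = 𝒯.map (fun _ => PUnit.unit.{u + 1}) (𝒯.map Prod.fst 𝔴'.1) :=
        congrArg _ 𝔴'.2.1.symm
      rw [t1, 𝒯.map_map]
      exact 𝔴'.2.2
    obtain ⟨𝔯', hm', hc', hle'⟩ := 𝒯.crux a ψ.1 ψ.2 𝔯 𝔛.1 (𝔛.2.trans hsnd.symm)
    have hcc : 𝒯.map (fun _ => PUnit.unit.{u + 1}) 𝔯' = 𝔞 := hc'.trans h𝔞
    rw [hXval]
    refine 𝒯.le_ihom ?_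
    rw [← 𝒯.tens_assoc]
    calc 𝒯.tens (𝒯.tens (𝒯.xi (𝒯.map (fun p : T X × X => a.rel p.1 p.2) 𝔯))
            (𝒯.xi (𝒯.map ψ.1 𝔛.1)))
          (𝒯.powRel X (𝒯.map (fun _ => ψ.1) 𝔞) h.1)
        ≤ 𝒯.tens (𝒯.xi (𝒯.map ψ.1 𝔯'))
            (𝒯.powRel X (𝒯.map (fun _ => ψ.1) 𝔞) h.1) := 𝒯.tens_le_tens_left _ hle'
      _ ≤ 𝒯.tens (𝒯.xi (𝒯.map ψ.1 𝔯'))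
            (𝒯.ihom (𝒯.xi (𝒯.map ψ.1 𝔯')) (h.1 (𝒯.m 𝔯'))) :=
          𝒯.tens_le_tens_right _ (key 𝔯' hcc)
      _ ≤ h.1 (𝒯.m 𝔯') := 𝒯.tens_ihom_le _ _
      _ = h.1 (𝒯.m (𝒯.map Prod.fst 𝔯)) := by rw [hm']

end TopTheory

end Paper
end

section
/- Let f: Y → X be a 𝒯-functor and ψ: Y ⇸∘ Z a 𝒯-module. Then colim(ψ, f) ≅ colim(ψ∘f^*, 1_X); consequently, a 𝒯-category X is cocomplete if and only if for every 𝒯-module ψ: X ⇸∘ Z the extension 1_X^* ⟜ ψ is of the form g_* for some 𝒯-functor g: Z → X, and a 𝒯-functor f: X → X' is cocontinuous if and only if it preserves all ψ-weighted colimits of 1_X. -/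
universe u

namespace Paper

namespace TopTheory

variable {V : Type u} [CompleteLattice V] {T : Type u → Type u}

variable {𝒯 : TopTheory V T}

/-! ### Auxiliary lemmas for Statement 15 -/

section Statement15Aux

variable {𝒯 : TopTheory V T}

lemma map_id_apply {X : Type u} (𝔞 : T X) : 𝒯.map id 𝔞 = 𝔞 := by
  rw [𝒯.map_id]; rfl

lemma map_comp' {X Y Z : Type u} (g : Y → Z) (f : X → Y) (𝔵 : T X) :
    𝒯.map (fun x => g (f x)) 𝔵 = 𝒯.map g (𝒯.map f 𝔵) :=
  𝒯.map_comp g f 𝔵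

lemma tens_mono_right (u : V) {v v' : V} (h : v ≤ v') : 𝒯.tens u v ≤ 𝒯.tens u v' := by
  have hs : sSup ({v, v'} : Set V) = v' := by
    rw [sSup_pair]; exact sup_eq_right.mpr h
  have ht := 𝒯.tens_sSup u ({v, v'} : Set V)
  rw [hs] at ht
  rw [ht]
  exact le_biSup _ (by simp)

lemma tens_le_tens {u u' v v' : V} (hu : u ≤ u') (hv : v ≤ v') :
    𝒯.tens u v ≤ 𝒯.tens u' v' := by
  calc 𝒯.tens u v ≤ 𝒯.tens u v' := tens_mono_right u hv
    _ = 𝒯.tens v' u := 𝒯.tens_comm u v'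
    _ ≤ 𝒯.tens v' u' := tens_mono_right v' hu
    _ = 𝒯.tens u' v' := 𝒯.tens_comm v' u'

lemma tens_iSup_right {ι : Sort*} (u : V) (s : ι → V) :
    𝒯.tens u (⨆ i, s i) = ⨆ i, 𝒯.tens u (s i) := by
  rw [iSup, 𝒯.tens_sSup, iSup_range]

lemma tens_iSup_left {ι : Sort*} (s : ι → V) (w : V) :
    𝒯.tens (⨆ i, s i) w = ⨆ i, 𝒯.tens (s i) w := by
  rw [𝒯.tens_comm, tens_iSup_right]
  exact iSup_congr fun i => 𝒯.tens_comm w (s i)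

lemma le_ihom_iff {u v w : V} : v ≤ 𝒯.ihom u w ↔ 𝒯.tens u v ≤ w := by
  constructor
  · intro h
    refine le_trans (tens_mono_right u h) ?_
    rw [ihom, 𝒯.tens_sSup]
    exact iSup₂_le fun z hz => hz
  · intro h; exact le_sSup h

lemma le_Txi {X Y : Type u} (r : X → Y → V) {𝔞 : T X} {𝔟 : T Y}
    (𝔴 : T (X × Y)) (h1 : 𝒯.map Prod.fst 𝔴 = 𝔞) (h2 : 𝒯.map Prod.snd 𝔴 = 𝔟) :
    𝒯.xi (𝒯.map (fun p => r p.1 p.2) 𝔴) ≤ 𝒯.Txi r 𝔞 𝔟 :=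
  le_iSup_of_le ⟨𝔴, h1, h2⟩ le_rfl

lemma Txi_le {X Y : Type u} {r : X → Y → V} {𝔞 : T X} {𝔟 : T Y} {c : V}
    (h : ∀ 𝔴 : T (X × Y), 𝒯.map Prod.fst 𝔴 = 𝔞 → 𝒯.map Prod.snd 𝔴 = 𝔟 →
      𝒯.xi (𝒯.map (fun p => r p.1 p.2) 𝔴) ≤ c) :
    𝒯.Txi r 𝔞 𝔟 ≤ c :=
  iSup_le fun 𝔴 => h 𝔴.1 𝔴.2.1 𝔴.2.2

lemma Txi_mono {X Y : Type u} {r r' : X → Y → V} (h : ∀ x y, r x y ≤ r' x y)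
    (𝔞 : T X) (𝔟 : T Y) : 𝒯.Txi r 𝔞 𝔟 ≤ 𝒯.Txi r' 𝔞 𝔟 :=
  Txi_le fun 𝔴 h1 h2 =>
    le_trans (𝒯.xi_mono _ _ (fun p => h p.1 p.2) 𝔴) (le_Txi r' 𝔴 h1 h2)

lemma Txi_push {X Y X' Y' : Type u} (g : X → X') (k : Y → Y') (θ : X' → Y' → V)
    (𝔞 : T X) (𝔟 : T Y) :
    𝒯.Txi (fun x y => θ (g x) (k y)) 𝔞 𝔟 ≤ 𝒯.Txi θ (𝒯.map g 𝔞) (𝒯.map k 𝔟) := by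
  refine Txi_le fun 𝔴 h1 h2 => ?_
  have key : 𝒯.map (fun p : X × Y => θ (g p.1) (k p.2)) 𝔴
      = 𝒯.map (fun p : X' × Y' => θ p.1 p.2) (𝒯.map (Prod.map g k) 𝔴) := by
    rw [← 𝒯.map_comp]; rfl
  rw [key]
  refine le_Txi θ _ ?_ ?_
  · rw [← 𝒯.map_comp, show (Prod.fst ∘ Prod.map g k : X × Y → X') = g ∘ Prod.fst from rfl,
      𝒯.map_comp, h1]
  · rw [← 𝒯.map_comp, show (Prod.snd ∘ Prod.map g k : X × Y → Y') = k ∘ Prod.snd from rfl,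
      𝒯.map_comp, h2]

lemma Txi_push_left {X Y X' : Type u} (g : X → X') (θ : X' → Y → V)
    (𝔞 : T X) (𝔟 : T Y) :
    𝒯.Txi (fun x y => θ (g x) y) 𝔞 𝔟 ≤ 𝒯.Txi θ (𝒯.map g 𝔞) 𝔟 := by
  have := Txi_push (𝒯 := 𝒯) g id θ 𝔞 𝔟
  rwa [map_id_apply] at this

lemma Txi_push_right {X Y Y' : Type u} (k : Y → Y') (θ : X → Y' → V)
    (𝔞 : T X) (𝔟 : T Y) :
    𝒯.Txi (fun x y => θ x (k y)) 𝔞 𝔟 ≤ 𝒯.Txi θ 𝔞 (𝒯.map k 𝔟) := by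
  have := Txi_push (𝒯 := 𝒯) id k θ 𝔞 𝔟
  rwa [map_id_apply] at this

end Statement15Aux

section Statement15Aux2

variable {𝒯 : TopTheory V T}

/-- `T_ξ` preserves composition of `V`-relations (one half via `ξ`-naturality,
the other via the Beck–Chevalley property of `T`). -/
lemma Txi_comp {X Y Z : Type u} (r : X → Y → V) (s : Y → Z → V) (𝔞 : T X) (𝔠 : T Z) :
    𝒯.Txi (fun x z => ⨆ y, 𝒯.tens (r x y) (s y z)) 𝔞 𝔠
      = ⨆ 𝔟 : T Y, 𝒯.tens (𝒯.Txi r 𝔞 𝔟) (𝒯.Txi s 𝔟 𝔠) := by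
  apply le_antisymm
  · refine Txi_le fun 𝔴 h1 h2 => ?_
    have hfib : (fun p : X × Z => ⨆ y, 𝒯.tens (r p.1 y) (s y p.2))
        = fun p : X × Z =>
            ⨆ q : {q : X × Y × Z // (fun q : X × Y × Z => (q.1, q.2.2)) q = p},
              (fun q : X × Y × Z => 𝒯.tens (r q.1 q.2.1) (s q.2.1 q.2.2)) q.1 := by
      funext p
      apply le_antisymm
      · exact iSup_le fun y => le_iSup_of_le ⟨⟨p.1, y, p.2⟩, rfl⟩ le_rfl
      · refine iSup_le fun q => ?_
        rcases q with ⟨⟨x, y, z⟩, hq⟩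
        cases hq
        exact le_iSup (fun y' => 𝒯.tens (r x y') (s y' z)) y
    have hnat := 𝒯.xi_nat (fun q : X × Y × Z => (q.1, q.2.2))
      (fun q : X × Y × Z => 𝒯.tens (r q.1 q.2.1) (s q.2.1 q.2.2)) 𝔴
    have hstep : 𝒯.xi (𝒯.map (fun p : X × Z => ⨆ y, 𝒯.tens (r p.1 y) (s y p.2)) 𝔴)
        = ⨆ 𝔮 : {𝔮 : T (X × Y × Z) // 𝒯.map (fun q : X × Y × Z => (q.1, q.2.2)) 𝔮 = 𝔴},
            𝒯.xi (𝒯.map (fun q : X × Y × Z => 𝒯.tens (r q.1 q.2.1) (s q.2.1 q.2.2)) 𝔮.1) :=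
      (congrArg (fun F => 𝒯.xi (𝒯.map F 𝔴)) hfib).trans hnat.symm
    rw [hstep]
    refine iSup_le fun 𝔮 => ?_
    rcases 𝔮 with ⟨𝔮, h𝔮⟩
    have e2' : 𝒯.xi (𝒯.map (fun q : X × Y × Z => 𝒯.tens (r q.1 q.2.1) (s q.2.1 q.2.2)) 𝔮)
        = 𝒯.tens (𝒯.xi (𝒯.map (fun q : X × Y × Z => r q.1 q.2.1) 𝔮))
            (𝒯.xi (𝒯.map (fun q : X × Y × Z => s q.2.1 q.2.2) 𝔮)) := by
      have e2 := 𝒯.xi_tens (𝒯.map (fun q : X × Y × Z => (r q.1 q.2.1, s q.2.1 q.2.2)) 𝔮)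
      have efst : 𝒯.map Prod.fst (𝒯.map (fun q : X × Y × Z => (r q.1 q.2.1, s q.2.1 q.2.2)) 𝔮)
          = 𝒯.map (fun q : X × Y × Z => r q.1 q.2.1) 𝔮 := by rw [← 𝒯.map_comp]; rfl
      have esnd : 𝒯.map Prod.snd (𝒯.map (fun q : X × Y × Z => (r q.1 q.2.1, s q.2.1 q.2.2)) 𝔮)
          = 𝒯.map (fun q : X × Y × Z => s q.2.1 q.2.2) 𝔮 := by rw [← 𝒯.map_comp]; rfl
      have emain : 𝒯.map (fun p : V × V => 𝒯.tens p.1 p.2)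
            (𝒯.map (fun q : X × Y × Z => (r q.1 q.2.1, s q.2.1 q.2.2)) 𝔮)
          = 𝒯.map (fun q : X × Y × Z => 𝒯.tens (r q.1 q.2.1) (s q.2.1 q.2.2)) 𝔮 := by
        rw [← 𝒯.map_comp]; rfl
      rw [efst, esnd, emain] at e2
      exact e2
    rw [e2']
    set 𝔟 := 𝒯.map (fun q : X × Y × Z => q.2.1) 𝔮 with h𝔟
    have b1 : 𝒯.xi (𝒯.map (fun q : X × Y × Z => r q.1 q.2.1) 𝔮) ≤ 𝒯.Txi r 𝔞 𝔟 := by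
      have em : 𝒯.map (fun q : X × Y × Z => r q.1 q.2.1) 𝔮
          = 𝒯.map (fun p : X × Y => r p.1 p.2) (𝒯.map (fun q : X × Y × Z => (q.1, q.2.1)) 𝔮) := by
        rw [← 𝒯.map_comp]; rfl
      rw [em]
      refine le_Txi r _ ?_ ?_
      · rw [← 𝒯.map_comp]
        have : ((Prod.fst ∘ fun q : X × Y × Z => (q.1, q.2.1)) : X × Y × Z → X)
            = Prod.fst ∘ (fun q : X × Y × Z => (q.1, q.2.2)) := rfl
        rw [this, 𝒯.map_comp, h𝔮, h1]
      · rw [← 𝒯.map_comp]; rfl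
    have b2 : 𝒯.xi (𝒯.map (fun q : X × Y × Z => s q.2.1 q.2.2) 𝔮) ≤ 𝒯.Txi s 𝔟 𝔠 := by
      have em : 𝒯.map (fun q : X × Y × Z => s q.2.1 q.2.2) 𝔮
          = 𝒯.map (fun p : Y × Z => s p.1 p.2) (𝒯.map (fun q : X × Y × Z => (q.2.1, q.2.2)) 𝔮) := by
        rw [← 𝒯.map_comp]; rfl
      rw [em]
      refine le_Txi s _ ?_ ?_
      · rw [← 𝒯.map_comp]; rfl
      · rw [← 𝒯.map_comp]
        have : ((Prod.snd ∘ fun q : X × Y × Z => (q.2.1, q.2.2)) : X × Y × Z → Z)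
            = Prod.snd ∘ (fun q : X × Y × Z => (q.1, q.2.2)) := rfl
        rw [this, 𝒯.map_comp, h𝔮, h2]
    exact le_iSup_of_le 𝔟 (tens_le_tens b1 b2)
  · refine iSup_le fun 𝔟 => ?_
    rw [Txi, tens_iSup_left]
    refine iSup_le fun 𝔴₁ => ?_
    rw [Txi, tens_iSup_right]
    refine iSup_le fun 𝔴₂ => ?_
    rcases 𝔴₁ with ⟨𝔴₁, h11, h12⟩
    rcases 𝔴₂ with ⟨𝔴₂, h21, h22⟩
    -- combine the witnesses using (BC)
    have hbc := 𝒯.map_bc Prod.snd Prod.fst 𝔴₁ 𝔴₂ (by rw [h12, h21])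
    obtain ⟨𝔴, hw1, hw2⟩ := hbc
    have ew1 : 𝒯.map (fun p : X × Y => r p.1 p.2) 𝔴₁
        = 𝒯.map (fun p : {p : (X × Y) × Y × Z // p.1.2 = p.2.1} => r p.1.1.1 p.1.1.2) 𝔴 := by
      rw [← hw1, ← 𝒯.map_comp]; rfl
    have ew2 : 𝒯.map (fun p : Y × Z => s p.1 p.2) 𝔴₂
        = 𝒯.map (fun p : {p : (X × Y) × Y × Z // p.1.2 = p.2.1} => s p.1.2.1 p.1.2.2) 𝔴 := by
      rw [← hw2, ← 𝒯.map_comp]; rfl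
    rw [ew1, ew2]
    have e2' : 𝒯.tens
        (𝒯.xi (𝒯.map (fun p : {p : (X × Y) × Y × Z // p.1.2 = p.2.1} => r p.1.1.1 p.1.1.2) 𝔴))
        (𝒯.xi (𝒯.map (fun p : {p : (X × Y) × Y × Z // p.1.2 = p.2.1} => s p.1.2.1 p.1.2.2) 𝔴))
        = 𝒯.xi (𝒯.map (fun p : {p : (X × Y) × Y × Z // p.1.2 = p.2.1} =>
            𝒯.tens (r p.1.1.1 p.1.1.2) (s p.1.2.1 p.1.2.2)) 𝔴) := by
      have e2 := 𝒯.xi_tens (𝒯.map (fun p : {p : (X × Y) × Y × Z // p.1.2 = p.2.1} =>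
        (r p.1.1.1 p.1.1.2, s p.1.2.1 p.1.2.2)) 𝔴)
      have efst : 𝒯.map Prod.fst (𝒯.map (fun p : {p : (X × Y) × Y × Z // p.1.2 = p.2.1} =>
            (r p.1.1.1 p.1.1.2, s p.1.2.1 p.1.2.2)) 𝔴)
          = 𝒯.map (fun p : {p : (X × Y) × Y × Z // p.1.2 = p.2.1} => r p.1.1.1 p.1.1.2) 𝔴 := by
        rw [← 𝒯.map_comp]; rfl
      have esnd : 𝒯.map Prod.snd (𝒯.map (fun p : {p : (X × Y) × Y × Z // p.1.2 = p.2.1} =>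
            (r p.1.1.1 p.1.1.2, s p.1.2.1 p.1.2.2)) 𝔴)
          = 𝒯.map (fun p : {p : (X × Y) × Y × Z // p.1.2 = p.2.1} => s p.1.2.1 p.1.2.2) 𝔴 := by
        rw [← 𝒯.map_comp]; rfl
      have emain : 𝒯.map (fun p : V × V => 𝒯.tens p.1 p.2)
            (𝒯.map (fun p : {p : (X × Y) × Y × Z // p.1.2 = p.2.1} =>
              (r p.1.1.1 p.1.1.2, s p.1.2.1 p.1.2.2)) 𝔴)
          = 𝒯.map (fun p : {p : (X × Y) × Y × Z // p.1.2 = p.2.1} =>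
              𝒯.tens (r p.1.1.1 p.1.1.2) (s p.1.2.1 p.1.2.2)) 𝔴 := by
        rw [← 𝒯.map_comp]; rfl
      rw [efst, esnd, emain] at e2
      exact e2.symm
    rw [e2']
    have hmono : ∀ p : {p : (X × Y) × Y × Z // p.1.2 = p.2.1},
        𝒯.tens (r p.1.1.1 p.1.1.2) (s p.1.2.1 p.1.2.2)
          ≤ ⨆ y, 𝒯.tens (r p.1.1.1 y) (s y p.1.2.2) := by
      rintro ⟨⟨⟨x, y⟩, ⟨y', z⟩⟩, (hp : y = y')⟩
      cases hp
      exact le_iSup (fun y'' => 𝒯.tens (r x y'') (s y'' z)) y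
    refine le_trans (𝒯.xi_mono _ _ hmono 𝔴) ?_
    have em : 𝒯.map (fun p : {p : (X × Y) × Y × Z // p.1.2 = p.2.1} =>
          ⨆ y, 𝒯.tens (r p.1.1.1 y) (s y p.1.2.2)) 𝔴
        = 𝒯.map (fun p : X × Z => ⨆ y, 𝒯.tens (r p.1 y) (s y p.2))
            (𝒯.map (fun p : {p : (X × Y) × Y × Z // p.1.2 = p.2.1} => (p.1.1.1, p.1.2.2)) 𝔴) := by
      rw [← 𝒯.map_comp]; rfl
    rw [em]
    refine le_Txi (fun x z => ⨆ y, 𝒯.tens (r x y) (s y z)) _ ?_ ?_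
    · rw [← 𝒯.map_comp]
      have : ((Prod.fst ∘ fun p : {p : (X × Y) × Y × Z // p.1.2 = p.2.1} => (p.1.1.1, p.1.2.2)) :
            {p : (X × Y) × Y × Z // p.1.2 = p.2.1} → X)
          = Prod.fst ∘ ((fun p : {p : (X × Y) × Y × Z // p.1.2 = p.2.1} => p.1.1)) := rfl
      rw [this, 𝒯.map_comp, hw1, h11]
    · rw [← 𝒯.map_comp]
      have : ((Prod.snd ∘ fun p : {p : (X × Y) × Y × Z // p.1.2 = p.2.1} => (p.1.1.1, p.1.2.2)) :
            {p : (X × Y) × Y × Z // p.1.2 = p.2.1} → Z)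
          = Prod.snd ∘ ((fun p : {p : (X × Y) × Y × Z // p.1.2 = p.2.1} => p.1.2)) := rfl
      rw [this, 𝒯.map_comp, hw2, h22]

end Statement15Aux2

section Statement15Aux3

variable {𝒯 : TopTheory V T}

/-- `T_ξ (θ · g°) = T_ξ θ · (T g)°`. -/
lemma Txi_fiber {A A' B : Type u} (g : A' → A) (θ : A' → B → V) (𝔞 : T A) (𝔟 : T B) :
    𝒯.Txi (fun a b => ⨆ a' : {a' : A' // g a' = a}, θ a'.1 b) 𝔞 𝔟
      = ⨆ 𝔠 : {𝔠 : T A' // 𝒯.map g 𝔠 = 𝔞}, 𝒯.Txi θ 𝔠.1 𝔟 := by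
  apply le_antisymm
  · refine Txi_le fun 𝔴 h1 h2 => ?_
    have hfib : (fun p : A × B => ⨆ a' : {a' : A' // g a' = p.1}, θ a'.1 p.2)
        = fun p : A × B =>
            ⨆ q : {q : A' × B // (fun q : A' × B => (g q.1, q.2)) q = p},
              (fun q : A' × B => θ q.1 q.2) q.1 := by
      funext p
      apply le_antisymm
      · refine iSup_le fun a' => le_iSup_of_le ⟨⟨a'.1, p.2⟩, ?_⟩ le_rfl
        simp [a'.2]
      · refine iSup_le fun q => ?_
        rcases q with ⟨⟨a', b⟩, hq⟩
        cases hq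
        exact le_iSup_of_le ⟨a', rfl⟩ le_rfl
    have hnat := 𝒯.xi_nat (fun q : A' × B => (g q.1, q.2)) (fun q : A' × B => θ q.1 q.2) 𝔴
    have hstep : 𝒯.xi (𝒯.map (fun p : A × B =>
          ⨆ a' : {a' : A' // g a' = p.1}, θ a'.1 p.2) 𝔴)
        = ⨆ 𝔮 : {𝔮 : T (A' × B) // 𝒯.map (fun q : A' × B => (g q.1, q.2)) 𝔮 = 𝔴},
            𝒯.xi (𝒯.map (fun q : A' × B => θ q.1 q.2) 𝔮.1) :=
      (congrArg (fun F => 𝒯.xi (𝒯.map F 𝔴)) hfib).trans hnat.symm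
    rw [hstep]
    refine iSup_le fun 𝔮 => ?_
    rcases 𝔮 with ⟨𝔮, h𝔮⟩
    have hc : 𝒯.map g (𝒯.map Prod.fst 𝔮) = 𝔞 := by
      rw [← 𝒯.map_comp]
      have : ((g ∘ Prod.fst) : A' × B → A)
          = Prod.fst ∘ (fun q : A' × B => (g q.1, q.2)) := rfl
      rw [this, 𝒯.map_comp, h𝔮, h1]
    refine le_iSup_of_le ⟨𝒯.map Prod.fst 𝔮, hc⟩ ?_
    refine le_Txi θ 𝔮 rfl ?_
    rw [← h2, ← h𝔮, ← 𝒯.map_comp]; rfl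
  · refine iSup_le fun 𝔠 => ?_
    rcases 𝔠 with ⟨𝔠, h𝔠⟩
    have step1 : 𝒯.Txi θ 𝔠 𝔟
        ≤ 𝒯.Txi (fun a' b => ⨆ a'' : {a'' : A' // g a'' = g a'}, θ a''.1 b) 𝔠 𝔟 := by
      refine Txi_mono (fun a' b => ?_) 𝔠 𝔟
      exact le_iSup_of_le (⟨a', rfl⟩ : {a'' : A' // g a'' = g a'}) le_rfl
    refine le_trans step1 ?_
    have step2 := Txi_push_left (𝒯 := 𝒯) g
      (fun a b => ⨆ a' : {a' : A' // g a' = a}, θ a'.1 b) 𝔠 𝔟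
    rw [h𝔠] at step2
    exact step2

/-- `T_ξ T_ξ θ` is below `T_ξ θ` along `m` (oplaxness of `m`). -/
lemma Txi_Txi_le {A B : Type u} (θ : A → B → V) (𝔄 : T (T A)) (𝔅 : T (T B)) :
    𝒯.Txi (𝒯.Txi θ) 𝔄 𝔅 ≤ 𝒯.Txi θ (𝒯.m 𝔄) (𝒯.m 𝔅) := by
  refine Txi_le fun 𝔴 h1 h2 => ?_
  have hfib : (fun p : T A × T B => 𝒯.Txi θ p.1 p.2)
      = fun p : T A × T B =>
          ⨆ q : {q : T (A × B) //
            (fun w : T (A × B) => (𝒯.map Prod.fst w, 𝒯.map Prod.snd w)) q = p},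
            (fun w : T (A × B) => 𝒯.xi (𝒯.map (fun u : A × B => θ u.1 u.2) w)) q.1 := by
    funext p
    apply le_antisymm
    · refine iSup_le fun q => ?_
      rcases q with ⟨w, hw1, hw2⟩
      exact le_iSup_of_le ⟨w, by show (𝒯.map Prod.fst w, 𝒯.map Prod.snd w) = p; rw [hw1, hw2]⟩
        le_rfl
    · refine iSup_le fun q => ?_
      rcases q with ⟨w, hw⟩
      have hw1 : 𝒯.map Prod.fst w = p.1 := congrArg Prod.fst hw
      have hw2 : 𝒯.map Prod.snd w = p.2 := congrArg Prod.snd hw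
      exact le_iSup_of_le ⟨w, hw1, hw2⟩ le_rfl
  have hnat := 𝒯.xi_nat
    (fun w : T (A × B) => (𝒯.map Prod.fst w, 𝒯.map Prod.snd w))
    (fun w : T (A × B) => 𝒯.xi (𝒯.map (fun u : A × B => θ u.1 u.2) w)) 𝔴
  have hstep : 𝒯.xi (𝒯.map (fun p : T A × T B => 𝒯.Txi θ p.1 p.2) 𝔴)
      = ⨆ 𝔚 : {𝔚 : T (T (A × B)) //
          𝒯.map (fun w : T (A × B) => (𝒯.map Prod.fst w, 𝒯.map Prod.snd w)) 𝔚 = 𝔴},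
          𝒯.xi (𝒯.map (fun w : T (A × B) =>
            𝒯.xi (𝒯.map (fun u : A × B => θ u.1 u.2) w)) 𝔚.1) :=
    (congrArg (fun F => 𝒯.xi (𝒯.map F 𝔴)) hfib).trans hnat.symm
  rw [hstep]
  refine iSup_le fun 𝔚 => ?_
  rcases 𝔚 with ⟨𝔚, h𝔚⟩
  have e1 : 𝒯.map (fun w : T (A × B) => 𝒯.xi (𝒯.map (fun u : A × B => θ u.1 u.2) w)) 𝔚
      = 𝒯.map 𝒯.xi (𝒯.map (𝒯.map (fun u : A × B => θ u.1 u.2)) 𝔚) := by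
    rw [← 𝒯.map_comp]; rfl
  rw [e1, ← 𝒯.xi_m, ← 𝒯.m_nat]
  -- now `xi (map θ' (m 𝔚))`, and `m 𝔚` is a witness over `(m 𝔄, m 𝔅)`
  refine le_Txi θ (𝒯.m 𝔚) ?_ ?_
  · rw [𝒯.m_nat]
    have : 𝒯.map (𝒯.map Prod.fst) 𝔚
        = 𝒯.map Prod.fst (𝒯.map (fun w : T (A × B) =>
            (𝒯.map Prod.fst w, 𝒯.map Prod.snd w)) 𝔚) := by
      rw [← 𝒯.map_comp]; rfl
    rw [this, h𝔚, h1]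
  · rw [𝒯.m_nat]
    have : 𝒯.map (𝒯.map Prod.snd) 𝔚
        = 𝒯.map Prod.snd (𝒯.map (fun w : T (A × B) =>
            (𝒯.map Prod.fst w, 𝒯.map Prod.snd w)) 𝔚) := by
      rw [← 𝒯.map_comp]; rfl
    rw [this, h𝔚, h2]

/-- `m° · T_ξ θ ≤ T_ξ T_ξ θ · m°` (via the Beck–Chevalley property of `m`). -/
lemma Txi_m_le {A B : Type u} (θ : A → B → V) (𝔞 : T A) (𝔅 : T (T B)) :
    𝒯.Txi θ 𝔞 (𝒯.m 𝔅) ≤ ⨆ 𝔄 : {𝔄 : T (T A) // 𝒯.m 𝔄 = 𝔞}, 𝒯.Txi (𝒯.Txi θ) 𝔄.1 𝔅 := by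
  refine Txi_le fun 𝔴 h1 h2 => ?_
  obtain ⟨𝔚, hW1, hW2⟩ := 𝒯.m_bc Prod.snd 𝔅 𝔴 h2.symm
  have hm : 𝒯.m (𝒯.map (𝒯.map Prod.fst) 𝔚) = 𝔞 := by
    rw [← 𝒯.m_nat, hW2, h1]
  refine le_iSup_of_le ⟨𝒯.map (𝒯.map Prod.fst) 𝔚, hm⟩ ?_
  have e1 : 𝒯.xi (𝒯.map (fun p : A × B => θ p.1 p.2) 𝔴)
      = 𝒯.xi (𝒯.map (fun w : T (A × B) =>
          𝒯.xi (𝒯.map (fun p : A × B => θ p.1 p.2) w)) 𝔚) := by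
    rw [← hW2, 𝒯.m_nat, 𝒯.xi_m, ← 𝒯.map_comp]
    rfl
  rw [e1]
  have e2 : ∀ w : T (A × B),
      𝒯.xi (𝒯.map (fun p : A × B => θ p.1 p.2) w)
        ≤ (fun p : T A × T B => 𝒯.Txi θ p.1 p.2)
            ((fun w : T (A × B) => (𝒯.map Prod.fst w, 𝒯.map Prod.snd w)) w) :=
    fun w => le_Txi θ w rfl rfl
  refine le_trans (𝒯.xi_mono _ _ e2 𝔚) ?_
  have e3 : 𝒯.map (fun w : T (A × B) =>
        (fun p : T A × T B => 𝒯.Txi θ p.1 p.2)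
          ((fun w : T (A × B) => (𝒯.map Prod.fst w, 𝒯.map Prod.snd w)) w)) 𝔚
      = 𝒯.map (fun p : T A × T B => 𝒯.Txi θ p.1 p.2)
          (𝒯.map (fun w : T (A × B) => (𝒯.map Prod.fst w, 𝒯.map Prod.snd w)) 𝔚) := by
    rw [← 𝒯.map_comp]; rfl
  rw [e3]
  refine le_Txi (𝒯.Txi θ) _ ?_ ?_
  · rw [← 𝒯.map_comp]; rfl
  · rw [← 𝒯.map_comp]
    have : (Prod.snd ∘ (fun w : T (A × B) => (𝒯.map Prod.fst w, 𝒯.map Prod.snd w)))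
        = 𝒯.map Prod.snd := rfl
    rw [this, hW1]

end Statement15Aux3

section Statement15Aux4

variable {𝒯 : TopTheory V T}

lemma tens_iSup2 {ι : Sort*} {κ : ι → Sort*} (u : V) (s : ∀ i, κ i → V) :
    𝒯.tens u (⨆ i, ⨆ j, s i j) = ⨆ i, ⨆ j, 𝒯.tens u (s i j) := by
  rw [tens_iSup_right]
  exact iSup_congr fun i => tens_iSup_right u (s i)

/-- Decomposition of `T_ξ (β ∘ α)` for the Kleisli convolution. -/
lemma Txi_kleisli {X Y Z : Type u} (α : T X → Y → V) (β : T Y → Z → V)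
    (𝔛 : T (T X)) (𝔷 : T Z) :
    𝒯.Txi (𝒯.kleisli β α) 𝔛 𝔷
      = ⨆ 𝔄 : {𝔄 : T (T (T X)) // 𝒯.map 𝒯.m 𝔄 = 𝔛}, ⨆ 𝔜 : T (T Y),
          𝒯.tens (𝒯.Txi (𝒯.Txi α) 𝔄.1 𝔜) (𝒯.Txi β 𝔜 𝔷) := by
  have e1 : 𝒯.kleisli β α = fun 𝔵 z => ⨆ 𝔶 : T Y,
      𝒯.tens ((fun 𝔵' 𝔶' => ⨆ 𝔛' : {𝔛' : T (T X) // 𝒯.m 𝔛' = 𝔵'}, 𝒯.Txi α 𝔛'.1 𝔶') 𝔵 𝔶)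
        (β 𝔶 z) := by
    funext 𝔵 z
    rw [kleisli, iSup_comm]
    exact iSup_congr fun 𝔶 => (tens_iSup_left _ _).symm
  calc 𝒯.Txi (𝒯.kleisli β α) 𝔛 𝔷
      = 𝒯.Txi (fun 𝔵 z => ⨆ 𝔶 : T Y,
          𝒯.tens ((fun 𝔵' 𝔶' => ⨆ 𝔛' : {𝔛' : T (T X) // 𝒯.m 𝔛' = 𝔵'}, 𝒯.Txi α 𝔛'.1 𝔶') 𝔵 𝔶)
            (β 𝔶 z)) 𝔛 𝔷 := by rw [e1]
    _ = ⨆ 𝔜 : T (T Y),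
          𝒯.tens (𝒯.Txi (fun 𝔵' 𝔶' =>
              ⨆ 𝔛' : {𝔛' : T (T X) // 𝒯.m 𝔛' = 𝔵'}, 𝒯.Txi α 𝔛'.1 𝔶') 𝔛 𝔜)
            (𝒯.Txi β 𝔜 𝔷) :=
        Txi_comp (fun 𝔵' 𝔶' => ⨆ 𝔛' : {𝔛' : T (T X) // 𝒯.m 𝔛' = 𝔵'}, 𝒯.Txi α 𝔛'.1 𝔶') β 𝔛 𝔷
    _ = ⨆ 𝔜 : T (T Y),
          𝒯.tens (⨆ 𝔄 : {𝔄 : T (T (T X)) // 𝒯.map 𝒯.m 𝔄 = 𝔛}, 𝒯.Txi (𝒯.Txi α) 𝔄.1 𝔜)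
            (𝒯.Txi β 𝔜 𝔷) :=
        iSup_congr fun 𝔜 => congrArg (fun u => 𝒯.tens u (𝒯.Txi β 𝔜 𝔷))
          (Txi_fiber 𝒯.m (𝒯.Txi α) 𝔛 𝔜)
    _ = ⨆ 𝔜 : T (T Y), ⨆ 𝔄 : {𝔄 : T (T (T X)) // 𝒯.map 𝒯.m 𝔄 = 𝔛},
          𝒯.tens (𝒯.Txi (𝒯.Txi α) 𝔄.1 𝔜) (𝒯.Txi β 𝔜 𝔷) :=
        iSup_congr fun 𝔜 => tens_iSup_left _ _
    _ = ⨆ 𝔄 : {𝔄 : T (T (T X)) // 𝒯.map 𝒯.m 𝔄 = 𝔛}, ⨆ 𝔜 : T (T Y),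
          𝒯.tens (𝒯.Txi (𝒯.Txi α) 𝔄.1 𝔜) (𝒯.Txi β 𝔜 𝔷) := iSup_comm

/-- Associativity of the Kleisli convolution. -/
lemma kleisli_assoc {X Y Z W : Type u} (α : T X → Y → V) (β : T Y → Z → V)
    (χ : T Z → W → V) (𝔵 : T X) (w : W) :
    𝒯.kleisli (𝒯.kleisli χ β) α 𝔵 w = 𝒯.kleisli χ (𝒯.kleisli β α) 𝔵 w := by
  apply le_antisymm
  · refine iSup_le fun 𝔛 => iSup_le fun 𝔶 => ?_
    rcases 𝔛 with ⟨𝔛, h𝔛⟩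
    calc 𝒯.tens (𝒯.Txi α 𝔛 𝔶) (𝒯.kleisli χ β 𝔶 w)
        = ⨆ 𝔜 : {𝔜 : T (T Y) // 𝒯.m 𝔜 = 𝔶}, ⨆ 𝔷 : T Z,
            𝒯.tens (𝒯.Txi α 𝔛 𝔶) (𝒯.tens (𝒯.Txi β 𝔜.1 𝔷) (χ 𝔷 w)) := tens_iSup2 _ _
      _ ≤ 𝒯.kleisli χ (𝒯.kleisli β α) 𝔵 w := by
        refine iSup_le fun 𝔜 => iSup_le fun 𝔷 => ?_
        rcases 𝔜 with ⟨𝔜, h𝔜⟩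
        cases h𝔜
        refine le_trans (tens_le_tens (Txi_m_le α 𝔛 𝔜) le_rfl) ?_
        rw [tens_iSup_left]
        refine iSup_le fun 𝔄 => ?_
        rcases 𝔄 with ⟨𝔄, h𝔄⟩
        have hm : 𝒯.m (𝒯.map 𝒯.m 𝔄) = 𝔵 := by rw [← 𝒯.m_assoc, h𝔄, h𝔛]
        refine le_trans (le_of_eq (𝒯.tens_assoc _ _ _).symm) ?_
        refine le_iSup_of_le ⟨𝒯.map 𝒯.m 𝔄, hm⟩ (le_iSup_of_le 𝔷 (tens_le_tens ?_ le_rfl))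
        rw [Txi_kleisli]
        exact le_iSup_of_le ⟨𝔄, rfl⟩ (le_iSup_of_le 𝔜 le_rfl)
  · refine iSup_le fun 𝔛' => iSup_le fun 𝔷 => ?_
    rcases 𝔛' with ⟨𝔛', h𝔛'⟩
    rw [Txi_kleisli, tens_iSup_left]
    refine iSup_le fun 𝔄 => ?_
    rcases 𝔄 with ⟨𝔄, h𝔄⟩
    rw [tens_iSup_left]
    refine iSup_le fun 𝔜 => ?_
    have hm : 𝒯.m (𝒯.m 𝔄) = 𝔵 := by rw [𝒯.m_assoc, h𝔄, h𝔛']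
    refine le_iSup_of_le ⟨𝒯.m 𝔄, hm⟩ (le_iSup_of_le (𝒯.m 𝔜) ?_)
    rw [𝒯.tens_assoc]
    refine tens_le_tens (Txi_Txi_le α 𝔄 𝔜) ?_
    exact le_iSup_of_le (⟨𝔜, rfl⟩ : {𝔜' : T (T Y) // 𝒯.m 𝔜' = 𝒯.m 𝔜})
      (le_iSup_of_le 𝔷 le_rfl)

lemma kleisli_mono {X Y Z : Type u} {α α' : T X → Y → V} {β β' : T Y → Z → V}
    (hα : ∀ 𝔵 y, α 𝔵 y ≤ α' 𝔵 y) (hβ : ∀ 𝔶 z, β 𝔶 z ≤ β' 𝔶 z) (𝔵 : T X) (z : Z) :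
    𝒯.kleisli β α 𝔵 z ≤ 𝒯.kleisli β' α' 𝔵 z := by
  refine iSup_le fun 𝔛 => iSup_le fun 𝔶 => ?_
  exact le_iSup_of_le 𝔛 (le_iSup_of_le 𝔶
    (tens_le_tens (Txi_mono hα 𝔛.1 𝔶) (hβ 𝔶 z)))

end Statement15Aux4

section Statement15Aux5

variable {𝒯 : TopTheory V T}

lemma isTFunctor_id {X : Type u} (a : 𝒯.TCatStr X) : IsTFunctor a a id := by
  intro 𝔵 x
  rw [map_id_apply]
  exact le_rfl

lemma costar_left {X A : Type u} (a : 𝒯.TCatStr X) (h : A → X) (𝔵 : T X) (y : A) :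
    𝒯.kleisli (modCostar a h) a.rel 𝔵 y ≤ modCostar a h 𝔵 y :=
  a.comp 𝔵 (h y)

lemma costar_right {X A : Type u} (as : 𝒯.TCatStr A) (a : 𝒯.TCatStr X) (h : A → X)
    (hh : IsTFunctor as a h) (𝔵 : T X) (y : A) :
    𝒯.kleisli as.rel (modCostar a h) 𝔵 y ≤ modCostar a h 𝔵 y := by
  refine iSup_le fun 𝔛 => iSup_le fun 𝔞 => ?_
  have h1 : 𝒯.Txi (modCostar a h) 𝔛.1 𝔞 ≤ 𝒯.Txi a.rel 𝔛.1 (𝒯.map h 𝔞) :=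
    Txi_push_right h a.rel 𝔛.1 𝔞
  refine le_trans (tens_le_tens h1 (hh 𝔞 y)) ?_
  refine le_trans (le_iSup_of_le 𝔛 (le_iSup_of_le (𝒯.map h 𝔞) le_rfl) :
    _ ≤ 𝒯.kleisli a.rel a.rel 𝔵 (h y)) (a.comp 𝔵 (h y))

/-- `ψ ∘ h^*` is a `𝒯`-module `X ⇸∘ Z` whenever `ψ : A ⇸∘ Z` is one and
`h : (A, as) → (X, a)` is a `𝒯`-functor. -/
lemma mod_costar {X A Z : Type u} (as : 𝒯.TCatStr A) (cs : 𝒯.TCatStr Z)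
    (a : 𝒯.TCatStr X) (h : A → X) (hh : IsTFunctor as a h) (ψ : T A → Z → V)
    (hψ : 𝒯.IsTModRel as.rel cs.rel ψ) :
    𝒯.IsTModRel a.rel cs.rel (𝒯.kleisli ψ (modCostar a h)) := by
  constructor
  · intro 𝔵 z
    rw [kleisli_assoc a.rel (modCostar a h) ψ 𝔵 z]
    exact kleisli_mono (costar_left a h) (fun _ _ => le_rfl) 𝔵 z
  · intro 𝔵 z
    rw [← kleisli_assoc (modCostar a h) ψ cs.rel 𝔵 z]
    exact kleisli_mono (fun _ _ => le_rfl) hψ.2 𝔵 z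

lemma le_extend_iff {X Y Z : Type u} {φ : T X → Y → V} {ψ : T X → Z → V}
    {𝔷 : T Z} {y : Y} {v : V} :
    v ≤ 𝒯.extend φ ψ 𝔷 y ↔
      ∀ 𝔵 : T X, 𝒯.tens (⨆ 𝔛 : {𝔛 : T (T X) // 𝒯.m 𝔛 = 𝔵}, 𝒯.Txi ψ 𝔛.1 𝔷) v ≤ φ 𝔵 y :=
  ⟨fun hv 𝔵 => le_ihom_iff.mp (le_iInf_iff.mp hv 𝔵),
   fun hv => le_iInf fun 𝔵 => le_ihom_iff.mpr (hv 𝔵)⟩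

/-- The key computation: `(f·h)_* ⟜ ψ = f_* ⟜ (ψ ∘ h^*)`. -/
lemma extend_comp {X X' A Z : Type u} (a : 𝒯.TCatStr X) (a' : 𝒯.TCatStr X')
    (f : X → X') (hf : IsTFunctor a a' f) (h : A → X) (ψ : T A → Z → V)
    (𝔷 : T Z) (x' : X') :
    𝒯.extend (modStar a' (f ∘ h)) ψ 𝔷 x'
      = 𝒯.extend (modStar a' f) (𝒯.kleisli ψ (modCostar a h)) 𝔷 x' := by
  have main : ∀ v : V,
      (∀ 𝔞 : T A, 𝒯.tens (⨆ 𝔄 : {𝔄 : T (T A) // 𝒯.m 𝔄 = 𝔞}, 𝒯.Txi ψ 𝔄.1 𝔷) v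
          ≤ a'.rel (𝒯.map (f ∘ h) 𝔞) x')
        ↔ (∀ 𝔵 : T X, 𝒯.tens (⨆ 𝔛 : {𝔛 : T (T X) // 𝒯.m 𝔛 = 𝔵},
              𝒯.Txi (𝒯.kleisli ψ (modCostar a h)) 𝔛.1 𝔷) v ≤ a'.rel (𝒯.map f 𝔵) x') := by
    intro v
    constructor
    · -- from the `(f·h)`-condition to the `f`-condition
      intro H 𝔵
      rw [tens_iSup_left]
      refine iSup_le fun 𝔛 => ?_
      rcases 𝔛 with ⟨𝔛, h𝔛⟩
      rw [Txi_kleisli, tens_iSup_left]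
      refine iSup_le fun 𝔄 => ?_
      rcases 𝔄 with ⟨𝔄, h𝔄⟩
      rw [tens_iSup_left]
      refine iSup_le fun 𝔜 => ?_
      rw [𝒯.tens_assoc]
      have hψv : 𝒯.tens (𝒯.Txi ψ 𝔜 𝔷) v ≤ a'.rel (𝒯.map f (𝒯.map h (𝒯.m 𝔜))) x' := by
        have hin : 𝒯.Txi ψ 𝔜 𝔷
            ≤ ⨆ 𝔄' : {𝔄' : T (T A) // 𝒯.m 𝔄' = 𝒯.m 𝔜}, 𝒯.Txi ψ 𝔄'.1 𝔷 :=
          le_iSup_of_le ⟨𝔜, rfl⟩ le_rfl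
        refine le_trans (tens_le_tens hin le_rfl) ?_
        have hH := H (𝒯.m 𝔜)
        rwa [𝒯.map_comp] at hH
      have hTT : 𝒯.Txi (𝒯.Txi (modCostar a h)) 𝔄 𝔜
          ≤ 𝒯.Txi a'.rel (𝒯.map (𝒯.map f) (𝒯.m 𝔄)) (𝒯.map f (𝒯.map h (𝒯.m 𝔜))) :=
        le_trans (Txi_Txi_le (modCostar a h) 𝔄 𝔜)
          (le_trans (Txi_push_right h a.rel (𝒯.m 𝔄) (𝒯.m 𝔜))
            (le_trans (Txi_mono hf (𝒯.m 𝔄) (𝒯.map h (𝒯.m 𝔜)))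
              (Txi_push (𝒯.map f) f a'.rel (𝒯.m 𝔄) (𝒯.map h (𝒯.m 𝔜)))))
      refine le_trans (tens_le_tens hTT hψv) ?_
      · have hstep : 𝒯.tens
            (𝒯.Txi a'.rel (𝒯.map (𝒯.map f) (𝒯.m 𝔄)) (𝒯.map f (𝒯.map h (𝒯.m 𝔜))))
            (a'.rel (𝒯.map f (𝒯.map h (𝒯.m 𝔜))) x')
              ≤ 𝒯.kleisli a'.rel a'.rel (𝒯.m (𝒯.map (𝒯.map f) (𝒯.m 𝔄))) x' :=
          le_iSup_of_le ⟨𝒯.map (𝒯.map f) (𝒯.m 𝔄), rfl⟩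
            (le_iSup_of_le (𝒯.map f (𝒯.map h (𝒯.m 𝔜))) le_rfl)
        refine le_trans hstep (le_trans (a'.comp _ x') (le_of_eq ?_))
        have hm : 𝒯.m (𝒯.map (𝒯.map f) (𝒯.m 𝔄)) = 𝒯.map f 𝔵 := by
          rw [← 𝒯.m_nat, 𝒯.m_assoc, h𝔄, h𝔛]
        rw [hm]
    · -- from the `f`-condition to the `(f·h)`-condition
      intro H 𝔞
      rw [tens_iSup_left]
      refine iSup_le fun 𝔄 => ?_
      rcases 𝔄 with ⟨𝔄, h𝔄⟩
      have hpt : ∀ (𝔞' : T A) (z : Z),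
          ψ 𝔞' z ≤ 𝒯.kleisli ψ (modCostar a h) (𝒯.map h 𝔞') z := by
        intro 𝔞' z
        have hunit : 𝒯.unit
            ≤ 𝒯.Txi (modCostar a h) (𝒯.map (fun y : A => 𝒯.e (h y)) 𝔞') 𝔞' := by
          have hw1 : 𝒯.map Prod.fst (𝒯.map (fun y : A => (𝒯.e (h y), y)) 𝔞')
              = 𝒯.map (fun y : A => 𝒯.e (h y)) 𝔞' := by rw [← 𝒯.map_comp]; rfl
          have hw2 : 𝒯.map Prod.snd (𝒯.map (fun y : A => (𝒯.e (h y), y)) 𝔞') = 𝔞' := by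
            rw [← 𝒯.map_comp]
            exact map_id_apply 𝔞'
          refine le_trans ?_
            (le_Txi (modCostar a h) (𝒯.map (fun y : A => (𝒯.e (h y), y)) 𝔞') hw1 hw2)
          have e1 : 𝒯.map (fun p : T X × A => modCostar a h p.1 p.2)
                (𝒯.map (fun y : A => (𝒯.e (h y), y)) 𝔞')
              = 𝒯.map (fun y : A => a.rel (𝒯.e (h y)) (h y)) 𝔞' := by
            rw [← 𝒯.map_comp]; rfl
          rw [e1]
          exact le_trans (le_of_eq (𝒯.xi_unit 𝔞').symm)
            (𝒯.xi_mono _ _ (fun y => a.le_refl (h y)) 𝔞')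
        have hme : 𝒯.m (𝒯.map (fun y : A => 𝒯.e (h y)) 𝔞') = 𝒯.map h 𝔞' := by
          rw [map_comp' 𝒯.e h 𝔞', 𝒯.m_map_e]
        calc ψ 𝔞' z = 𝒯.tens 𝒯.unit (ψ 𝔞' z) := (𝒯.unit_tens _).symm
          _ ≤ 𝒯.tens (𝒯.Txi (modCostar a h) (𝒯.map (fun y : A => 𝒯.e (h y)) 𝔞') 𝔞')
              (ψ 𝔞' z) := tens_le_tens hunit le_rfl
          _ ≤ 𝒯.kleisli ψ (modCostar a h) (𝒯.map h 𝔞') z :=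
            le_iSup_of_le ⟨𝒯.map (fun y : A => 𝒯.e (h y)) 𝔞', hme⟩
              (le_iSup_of_le 𝔞' le_rfl)
      have hT : 𝒯.Txi ψ 𝔄 𝔷
          ≤ 𝒯.Txi (𝒯.kleisli ψ (modCostar a h)) (𝒯.map (𝒯.map h) 𝔄) 𝔷 :=
        le_trans (Txi_mono (fun 𝔞' z => hpt 𝔞' z) 𝔄 𝔷)
          (Txi_push_left (𝒯.map h) (𝒯.kleisli ψ (modCostar a h)) 𝔄 𝔷)
      have hmm : 𝒯.m (𝒯.map (𝒯.map h) 𝔄) = 𝒯.map h 𝔞 := by rw [← 𝒯.m_nat, h𝔄]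
      refine le_trans (tens_le_tens hT le_rfl) ?_
      have hin2 : 𝒯.Txi (𝒯.kleisli ψ (modCostar a h)) (𝒯.map (𝒯.map h) 𝔄) 𝔷
          ≤ ⨆ 𝔛 : {𝔛 : T (T X) // 𝒯.m 𝔛 = 𝒯.map h 𝔞},
              𝒯.Txi (𝒯.kleisli ψ (modCostar a h)) 𝔛.1 𝔷 :=
        le_iSup_of_le ⟨𝒯.map (𝒯.map h) 𝔄, hmm⟩ le_rfl
      refine le_trans (tens_le_tens hin2 le_rfl) ?_
      refine le_trans (H (𝒯.map h 𝔞)) (le_of_eq ?_)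
      exact (congrArg (fun t => a'.rel t x') (𝒯.map_comp f h 𝔞)).symm
  apply le_antisymm
  · exact le_extend_iff.mpr ((main _).mp (le_extend_iff.mp le_rfl))
  · exact le_extend_iff.mpr ((main _).mpr (le_extend_iff.mp le_rfl))

/-- `colim(ψ, h) ≅ colim(ψ ∘ h^*, 1_X)`. -/
lemma colim_iff {X A Z : Type u} (a : 𝒯.TCatStr X) (h : A → X) (ψ : T A → Z → V)
    (g : Z → X) :
    IsColimit a h ψ g ↔ IsColimit a id (𝒯.kleisli ψ (modCostar a h)) g := by
  have key := fun (𝔷 : T Z) (x : X) => extend_comp a a id (isTFunctor_id a) h ψ 𝔷 x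
  constructor
  · intro H 𝔷 x
    exact (H 𝔷 x).trans (key 𝔷 x)
  · intro H 𝔷 x
    exact (H 𝔷 x).trans (key 𝔷 x).symm

end Statement15Aux5

/-- Lemma 2.2. `colim(ψ, f) ≅ colim(ψ ∘ f^*, 1_X)`; consequently
`X` is cocomplete iff for every `𝒯`-module `ψ : X ⇸∘ Z` the extension `1_X^* ⟜ ψ` is
`g_*` for some `𝒯`-functor `g : Z → X`, and a `𝒯`-functor `f : X → X'` is
cocontinuous iff it preserves all `ψ`-weighted colimits of `1_X`. -/
theorem statement15 (𝒯 : TopTheory V T) {X : Type u} (a : 𝒯.TCatStr X) :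
    (∀ (Y Z : Type u) (bs : 𝒯.TCatStr Y) (cs : 𝒯.TCatStr Z) (f : Y → X),
       IsTFunctor bs a f → ∀ ψ : T Y → Z → V, 𝒯.IsTModRel bs.rel cs.rel ψ →
       ∀ g : Z → X,
         (IsColimit a f ψ g ↔ IsColimit a id (𝒯.kleisli ψ (modCostar a f)) g)) ∧
    (Cocomplete a ↔
      ∀ (Z : Type u) (cs : 𝒯.TCatStr Z) (ψ : T X → Z → V),
        𝒯.IsTModRel a.rel cs.rel ψ →
        ∃ g : Z → X, IsTFunctor cs a g ∧ IsColimit a id ψ g) ∧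
    (∀ (X' : Type u) (a' : 𝒯.TCatStr X') (f : X → X'), IsTFunctor a a' f →
      (Cocontinuous a a' f ↔
        ∀ (Z : Type u) (cs : 𝒯.TCatStr Z) (ψ : T X → Z → V),
          𝒯.IsTModRel a.rel cs.rel ψ →
          ∀ g : Z → X, IsTFunctor cs a g → IsColimit a id ψ g →
            IsColimit a' f ψ (f ∘ g))) := by
  refine ⟨fun Y Z bs cs f _ ψ _ g => colim_iff a f ψ g, ?_, ?_⟩
  · constructor
    · intro hcc Z cs ψ hψ
      exact hcc X Z a cs id (isTFunctor_id a) ψ hψ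
    · intro H A Z as cs h hh ψ hψ
      obtain ⟨g, hg, hcol⟩ := H Z cs (𝒯.kleisli ψ (modCostar a h))
        (mod_costar as cs a h hh ψ hψ)
      exact ⟨g, hg, (colim_iff a h ψ g).mpr hcol⟩
  · intro X' a' f hf
    constructor
    · intro hcc Z cs ψ hψ g hg hcol
      exact hcc X Z a cs id ψ g (isTFunctor_id a) hψ hg hcol
    · intro H A Z as cs h ψ g hh hψ hg hcol
      have h1 : IsColimit a id (𝒯.kleisli ψ (modCostar a h)) g :=
        (colim_iff a h ψ g).mp hcol
      have h2 := H Z cs (𝒯.kleisli ψ (modCostar a h))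
        (mod_costar as cs a h hh ψ hψ) g hg h1
      intro 𝔷 x'
      exact (h2 𝔷 x').trans (extend_comp a a' f hf h ψ 𝔷 x').symm

end TopTheory

end Paper
end
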